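/- There exists a constant c > 0 and a family C of subsets of ω × ω with VC_2(C) = 1 such that π_{C,2}(m) ≥ 2^{c·m^{3/2}} for every m ≥ 1; in particular, there is no constant c' with π_{C,2}(m) ≤ 2^{c'·m·log₂ m} for all large m. -/

import Mathlib

/-- The subset of `ℕ × ℕ` determined by a box `A₀ × A₁`. -/
def boxSet2 (A₀ A₁ : Finset ℕ) : Set (ℕ × ℕ) := {p | p.1 ∈ A₀ ∧ p.2 ∈ A₁}

/-- The traces of a family `𝒞` of subsets of `ℕ × ℕ` on the box `A₀ × A₁`. -/
def traces2 (𝒞 : Set (Set (ℕ × ℕ))) (A₀ A₁ : Finset ℕ) : Set (Set (ℕ × ℕ)) :=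
  {s | ∃ C ∈ 𝒞, s = C ∩ boxSet2 A₀ A₁}

/-- `𝒞` shatters the box `A₀ × A₁`. -/
def ShattersBox2 (𝒞 : Set (Set (ℕ × ℕ))) (A₀ A₁ : Finset ℕ) : Prop :=
  ∀ B ⊆ boxSet2 A₀ A₁, ∃ C ∈ 𝒞, C ∩ boxSet2 A₀ A₁ = B

/-- A set of pairs is K_{2,2}-free. -/
def K22Free (S : Set (ℕ × ℕ)) : Prop :=
  ∀ a a' b b' : ℕ, a ≠ a' → b ≠ b' →
    ¬ ((a,b) ∈ S ∧ (a,b') ∈ S ∧ (a',b) ∈ S ∧ (a',b') ∈ S)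

def K22Family : Set (Set (ℕ × ℕ)) := {S | K22Free S}

lemma K22Free.mono {S T : Set (ℕ × ℕ)} (h : S ⊆ T) (hT : K22Free T) : K22Free S := by
  intro a a' b b' ha hb ⟨h1, h2, h3, h4⟩
  exact hT a a' b b' ha hb ⟨h h1, h h2, h h3, h h4⟩

lemma boxSet2_finite (A₀ A₁ : Finset ℕ) : (boxSet2 A₀ A₁).Finite := by
  have h : boxSet2 A₀ A₁ = (↑A₀ : Set ℕ) ×ˢ (↑A₁ : Set ℕ) := by
    ext p; simp [boxSet2, Set.mem_prod]
  rw [h]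
  exact (A₀.finite_toSet).prod (A₁.finite_toSet)

/-- Lower bound on traces from a K22-free subset of the box. -/
lemma trace_lower (A₀ A₁ : Finset ℕ) (G : Finset (ℕ × ℕ))
    (hsub : (↑G : Set (ℕ × ℕ)) ⊆ boxSet2 A₀ A₁) (hfree : K22Free ↑G) :
    2 ^ G.card ≤ (traces2 K22Family A₀ A₁).ncard := by
  have hP : ((fun (T : Finset (ℕ × ℕ)) => (↑T : Set (ℕ × ℕ))) '' ↑G.powerset)
      ⊆ traces2 K22Family A₀ A₁ := by
    rintro s ⟨T, hT, rfl⟩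
    have hTG : T ⊆ G := Finset.mem_powerset.mp (by simpa using hT)
    have hTbox : (↑T : Set (ℕ × ℕ)) ⊆ boxSet2 A₀ A₁ :=
      (Finset.coe_subset.mpr hTG).trans hsub
    refine ⟨↑T, hfree.mono (Finset.coe_subset.mpr hTG), ?_⟩
    rw [Set.inter_eq_left.mpr hTbox]
  have hfin : (traces2 K22Family A₀ A₁).Finite := by
    apply ((boxSet2_finite A₀ A₁).finite_subsets).subset
    rintro s ⟨C, _, rfl⟩
    exact Set.inter_subset_right
  calc 2 ^ G.card
      = ((fun (T : Finset (ℕ × ℕ)) => (↑T : Set (ℕ × ℕ))) '' ↑G.powerset).ncard := by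
        rw [Set.ncard_image_of_injective _ Finset.coe_injective, Set.ncard_coe_finset,
          Finset.card_powerset]
    _ ≤ _ := Set.ncard_le_ncard hP hfin

/-- Encoding of a pair of elements of `ZMod p` as a natural number `< p^2`. -/
def enc (p : ℕ) (q : ZMod p × ZMod p) : ℕ := q.1.val + p * q.2.val

lemma enc_lt (p : ℕ) [NeZero p] (q : ZMod p × ZMod p) : enc p q < p ^ 2 := by
  have h1 := ZMod.val_lt q.1
  have h2 := ZMod.val_lt q.2
  unfold enc; nlinarith

lemma enc_inj (p : ℕ) [NeZero p] : Function.Injective (enc p) := by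
  intro q r h
  have hp : 0 < p := Nat.pos_of_ne_zero (NeZero.ne p)
  have h1 := ZMod.val_lt q.1
  have h2 := ZMod.val_lt r.1
  have hv1 : q.1.val = r.1.val := by
    have := congrArg (· % p) h
    simpa [enc, Nat.add_mul_mod_self_left, Nat.mod_eq_of_lt h1, Nat.mod_eq_of_lt h2] using this
  have hv2 : q.2.val = r.2.val := by
    unfold enc at h
    exact Nat.eq_of_mul_eq_mul_left hp (by omega)
  exact Prod.ext (ZMod.val_injective p hv1) (ZMod.val_injective p hv2)

/-- The point–line incidence graph over `ZMod p`, encoded into `ℕ × ℕ`. -/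
def incGraph (p : ℕ) [NeZero p] : Finset (ℕ × ℕ) :=
  Finset.image (fun t : ZMod p × ZMod p × ZMod p =>
    (enc p (t.1, t.1 * t.2.1 + t.2.2), enc p t.2)) Finset.univ

lemma incGraph_card (p : ℕ) [NeZero p] : (incGraph p).card = p ^ 3 := by
  rw [incGraph, Finset.card_image_of_injective _ ?_, Finset.card_univ]
  · simp [Fintype.card_prod, ZMod.card]; ring
  · intro t s h
    simp only [Prod.mk.injEq] at h
    have h2 : t.2 = s.2 := enc_inj p h.2
    have h1 := enc_inj p h.1
    simp only [Prod.mk.injEq] at h1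
    exact Prod.ext h1.1 h2

lemma incGraph_mem {p : ℕ} [NeZero p] {u v : ℕ} (h : (u, v) ∈ incGraph p) :
    ∃ a x y : ZMod p, u = enc p (a, a * x + y) ∧ v = enc p (x, y) := by
  simp only [incGraph, Finset.mem_image, Finset.mem_univ, true_and, Prod.mk.injEq] at h
  obtain ⟨t, ht1, ht2⟩ := h
  exact ⟨t.1, t.2.1, t.2.2, ht1.symm, ht2.symm⟩

lemma incGraph_free (p : ℕ) [NeZero p] [Fact (Nat.Prime p)] :
    K22Free (↑(incGraph p) : Set (ℕ × ℕ)) := by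
  intro u u' v v' hu hv ⟨h1, h2, h3, h4⟩
  simp only [Finset.mem_coe] at h1 h2 h3 h4
  obtain ⟨a, x, y, hu1, hv1⟩ := incGraph_mem h1
  obtain ⟨a₂, x₂, y₂, hu2, hv2⟩ := incGraph_mem h2
  obtain ⟨a₃, x₃, y₃, hu3, hv3⟩ := incGraph_mem h3
  obtain ⟨a₄, x₄, y₄, hu4, hv4⟩ := incGraph_mem h4
  -- identify witnesses using injectivity of enc
  have e12 : a = a₂ ∧ a * x + y = a₂ * x₂ + y₂ := by
    have := enc_inj p (hu1.symm.trans hu2)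
    simpa [Prod.ext_iff] using this
  have e13 : x₃ = x ∧ y₃ = y := by
    have := enc_inj p (hv3.symm.trans hv1)
    simpa [Prod.ext_iff] using this
  have e24 : x₄ = x₂ ∧ y₄ = y₂ := by
    have := enc_inj p (hv4.symm.trans hv2)
    simpa [Prod.ext_iff] using this
  have e34 : a₃ = a₄ ∧ a₃ * x₃ + y₃ = a₄ * x₄ + y₄ := by
    have := enc_inj p (hu3.symm.trans hu4)
    simpa [Prod.ext_iff] using this
  obtain ⟨ha2, hrow1⟩ := e12
  obtain ⟨hx3, hy3⟩ := e13
  obtain ⟨hx4, hy4⟩ := e24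
  obtain ⟨ha34, hrow2⟩ := e34
  rw [← ha2] at hrow1
  rw [hx3, hy3, hx4, hy4, ← ha34] at hrow2
  rw [hx3, hy3] at hu3
  by_cases hax : a = a₃
  · apply hu
    rw [hu1, hu3, hax]
  · have hne : a - a₃ ≠ 0 := sub_ne_zero.mpr hax
    have hcan : (a - a₃) * x = (a - a₃) * x₂ := by linear_combination hrow1 - hrow2
    have hxx : x = x₂ := mul_left_cancel₀ hne hcan
    have hyy : y = y₂ := by rw [hxx] at hrow1; exact add_left_cancel hrow1
    apply hv
    rw [hv1, hv2, hxx, hyy]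

lemma incGraph_subset_box (p m : ℕ) [NeZero p] (h : p ^ 2 ≤ m) :
    (↑(incGraph p) : Set (ℕ × ℕ)) ⊆ boxSet2 (Finset.range m) (Finset.range m) := by
  intro q hq
  simp only [Finset.mem_coe, incGraph, Finset.mem_image, Finset.mem_univ, true_and] at hq
  obtain ⟨t, ht⟩ := hq
  constructor <;> simp only [Finset.mem_range] <;> rw [← ht] <;>
    exact lt_of_lt_of_le (enc_lt p _) h

lemma rpow_two_pow_eq (a b : ℕ) (hab : a * 3 = b * 2) :
    ((2 ^ a : ℕ) : ℝ) ^ ((3:ℝ)/2) = (2:ℝ) ^ b := by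
  push_cast
  rw [← Real.rpow_natCast (2:ℝ) a, ← Real.rpow_mul (by norm_num), ← Real.rpow_natCast (2:ℝ) b]
  congr 1
  field_simp
  exact_mod_cast congrArg (fun n : ℕ => (n : ℝ)) (hab.trans (Nat.mul_comm b 2))

/-- Main counting lemma: a K22-free subset of the `m × m` box with many points. -/
lemma exists_big_free (m : ℕ) (hm : 1 ≤ m) :
    ∃ G : Finset (ℕ × ℕ), (↑G : Set (ℕ × ℕ)) ⊆ boxSet2 (Finset.range m) (Finset.range m) ∧
      K22Free ↑G ∧ (1/8 : ℝ) * (m : ℝ) ^ ((3:ℝ)/2) ≤ (G.card : ℝ) := by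
  set k := Nat.sqrt m with hk
  by_cases hk2 : k < 2
  · -- small case: m ≤ 3, use a single point
    have hm3 : m ≤ 3 := by
      by_contra hc
      have : 2 ≤ Nat.sqrt m := Nat.le_sqrt.mpr (by omega)
      omega
    refine ⟨{(0, 0)}, ?_, ?_, ?_⟩
    · intro q hq
      simp only [Finset.coe_singleton, Set.mem_singleton_iff] at hq
      subst hq
      exact ⟨Finset.mem_range.mpr hm, Finset.mem_range.mpr hm⟩
    · intro a a' b b' ha hb ⟨p1, p2, p3, p4⟩
      simp only [Finset.coe_singleton, Set.mem_singleton_iff, Prod.mk.injEq] at p1 p3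
      omega
    · simp only [Finset.card_singleton, Nat.cast_one]
      have h4 : ((4:ℕ):ℝ) ^ ((3:ℝ)/2) = (2:ℝ) ^ 3 := by
        have := rpow_two_pow_eq 2 3 (by norm_num)
        norm_num at this ⊢
      have hle : ((m:ℝ)) ^ ((3:ℝ)/2) ≤ ((4:ℕ):ℝ) ^ ((3:ℝ)/2) := by
        apply Real.rpow_le_rpow (by positivity) (by exact_mod_cast (by omega : m ≤ 4)) (by norm_num)
      rw [h4] at hle
      norm_num at hle ⊢
      linarith
  · -- main case: Bertrand gives a prime p with k/2 < p ≤ k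
    push_neg at hk2
    obtain ⟨p, hp, hlo, hhi⟩ := Nat.exists_prime_lt_and_le_two_mul (k / 2) (by omega)
    haveI : Fact p.Prime := ⟨hp⟩
    haveI : NeZero p := ⟨hp.pos.ne'⟩
    have hpk : p ≤ k := le_trans hhi (by omega)
    have hp2m : p ^ 2 ≤ m := by
      calc p ^ 2 ≤ k ^ 2 := Nat.pow_le_pow_left hpk 2
        _ ≤ m := Nat.sqrt_le' m
    have hm4p : m ≤ 4 * p ^ 2 := by
      have h1 : m < (k + 1) ^ 2 := Nat.lt_succ_sqrt' m
      have h2 : k + 1 ≤ 2 * p := by omega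
      nlinarith
    refine ⟨incGraph p, incGraph_subset_box p m hp2m, incGraph_free p, ?_⟩
    rw [incGraph_card]
    -- (1/8) * m^{3/2} ≤ p^3 since m ≤ 4p² and (4p²)^{3/2} = 8p³
    have key : ((m:ℝ)) ^ ((3:ℝ)/2) ≤ ((4 * p ^ 2 : ℕ) : ℝ) ^ ((3:ℝ)/2) := by
      apply Real.rpow_le_rpow (by positivity) (by exact_mod_cast hm4p) (by norm_num)
    have hcomp : ((4 * p ^ 2 : ℕ) : ℝ) ^ ((3:ℝ)/2) = 8 * ((p:ℝ)) ^ 3 := by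
      have h1 : ((4 * p ^ 2 : ℕ) : ℝ) = ((2 * p : ℕ) : ℝ) ^ (2:ℕ) := by push_cast; ring
      rw [h1, ← Real.rpow_natCast ((2 * p : ℕ) : ℝ) 2, ← Real.rpow_mul (by positivity)]
      rw [show (((2:ℕ):ℝ) * ((3:ℝ)/2) : ℝ) = ((3:ℕ):ℝ) by push_cast; norm_num,
        Real.rpow_natCast]
      push_cast; ring
    rw [hcomp] at key
    push_cast
    linarith

lemma part3 (m : ℕ) (hm : 1 ≤ m) :
    ∃ A₀ A₁ : Finset ℕ, A₀.card = m ∧ A₁.card = m ∧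
      (2 : ℝ) ^ ((1/8 : ℝ) * (m : ℝ) ^ ((3 : ℝ) / 2)) ≤
        ((traces2 K22Family A₀ A₁).ncard : ℝ) := by
  obtain ⟨G, hsub, hfree, hcard⟩ := exists_big_free m hm
  refine ⟨Finset.range m, Finset.range m, Finset.card_range m, Finset.card_range m, ?_⟩
  have h1 : (2 : ℝ) ^ ((1/8 : ℝ) * (m : ℝ) ^ ((3 : ℝ) / 2)) ≤ (2:ℝ) ^ ((G.card : ℕ) : ℝ) :=
    (Real.rpow_le_rpow_left_iff (by norm_num)).mpr hcard
  have h2 : (2:ℝ) ^ ((G.card : ℕ) : ℝ) = ((2 ^ G.card : ℕ) : ℝ) := by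
    rw [Real.rpow_natCast]; push_cast; ring
  have h3 := trace_lower (Finset.range m) (Finset.range m) G hsub hfree
  calc (2 : ℝ) ^ ((1/8 : ℝ) * (m : ℝ) ^ ((3 : ℝ) / 2))
      ≤ ((2 ^ G.card : ℕ) : ℝ) := h2 ▸ h1
    _ ≤ _ := by exact_mod_cast h3

lemma sq_le_two_pow : ∀ t : ℕ, 4 ≤ t → t ^ 2 ≤ 2 ^ t := by
  intro t ht
  induction ht with
  | refl => norm_num
  | step h ih =>
    rename_i n
    have h4 : 4 ≤ n := h
    have h1 : 2 * n + 1 ≤ n ^ 2 := by nlinarith [Nat.mul_le_mul_right n h4]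
    calc (n + 1) ^ 2 = n ^ 2 + (2 * n + 1) := by ring
      _ ≤ 2 ^ n + 2 ^ n := by omega
      _ = 2 ^ (n + 1) := by ring


/-- There is a constant `c > 0` and a family `𝒞` of subsets of `ω × ω` with `VC₂(𝒞) = 1`
(some box of size `1` is shattered, no box of size `2` is) such that
`π_{𝒞,2}(m) ≥ 2^(c·m^(3/2))` for every `m ≥ 1`; in particular there is no constant `c'`
with `π_{𝒞,2}(m) ≤ 2^(c'·m·log₂ m)` for all large `m`. -/
theorem stmt_10 :
    ∃ c : ℝ, 0 < c ∧ ∃ 𝒞 : Set (Set (ℕ × ℕ)),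
      (∃ A₀ A₁ : Finset ℕ, A₀.card = 1 ∧ A₁.card = 1 ∧ ShattersBox2 𝒞 A₀ A₁) ∧
      (∀ A₀ A₁ : Finset ℕ, A₀.card = 2 → A₁.card = 2 → ¬ ShattersBox2 𝒞 A₀ A₁) ∧
      (∀ m : ℕ, 1 ≤ m → ∃ A₀ A₁ : Finset ℕ, A₀.card = m ∧ A₁.card = m ∧
        (2 : ℝ) ^ (c * (m : ℝ) ^ ((3 : ℝ) / 2)) ≤ ((traces2 𝒞 A₀ A₁).ncard : ℝ)) ∧
      ¬ ∃ c' : ℝ, ∃ M : ℕ, ∀ m : ℕ, M ≤ m → ∀ A₀ A₁ : Finset ℕ,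
          A₀.card = m → A₁.card = m →
          ((traces2 𝒞 A₀ A₁).ncard : ℝ) ≤ (2 : ℝ) ^ (c' * m * Real.logb 2 m) := by
  refine ⟨1/8, by norm_num, K22Family, ?_, ?_, fun m hm => part3 m hm, ?_⟩
  · -- a 1×1 box is shattered
    refine ⟨{0}, {0}, rfl, rfl, ?_⟩
    intro B hB
    refine ⟨B, ?_, Set.inter_eq_left.mpr hB⟩
    intro a a' b b' ha hb ⟨p1, p2, p3, p4⟩
    have h1 := hB p1
    have h3 := hB p3
    simp only [boxSet2, Set.mem_setOf_eq, Finset.mem_singleton] at h1 h3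
    exact ha (h1.1.trans h3.1.symm)
  · -- no 2×2 box is shattered
    intro A₀ A₁ h0 h1 hsh
    obtain ⟨C, hC, hCB⟩ := hsh (boxSet2 A₀ A₁) subset_rfl
    have hsub : boxSet2 A₀ A₁ ⊆ C := by
      intro q hq
      have := hCB.symm ▸ hq
      exact this.1
    obtain ⟨a, ha, a', ha', haa⟩ := Finset.one_lt_card.mp (by omega : 1 < A₀.card)
    obtain ⟨b, hb, b', hb', hbb⟩ := Finset.one_lt_card.mp (by omega : 1 < A₁.card)
    exact hC a a' b b' haa hbb
      ⟨hsub ⟨ha, hb⟩, hsub ⟨ha, hb'⟩, hsub ⟨ha', hb⟩, hsub ⟨ha', hb'⟩⟩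
  · -- no c' with π(m) ≤ 2^(c' m log m)
    rintro ⟨c', M, h⟩
    set t : ℕ := max 4 (max M (⌈16 * c'⌉₊ + 1)) with htdef
    have ht4 : 4 ≤ t := le_max_left _ _
    have htM : M ≤ t := le_trans (le_max_left _ _) (le_max_right _ _)
    have htc : 16 * c' < (t : ℝ) := by
      have h1 : (⌈16 * c'⌉₊ + 1 : ℕ) ≤ t := le_trans (le_max_right _ _) (le_max_right _ _)
      have h2 : 16 * c' ≤ (⌈16 * c'⌉₊ : ℝ) := Nat.le_ceil _
      have h3 : ((⌈16 * c'⌉₊ + 1 : ℕ) : ℝ) ≤ (t : ℝ) := by exact_mod_cast h1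
      push_cast at h3
      linarith
    set m : ℕ := 2 ^ (2 * t) with hmdef
    have hm1 : 1 ≤ m := Nat.one_le_two_pow
    have hMm : M ≤ m := le_trans htM (le_trans (by omega) (Nat.lt_two_pow_self (n := 2 * t)).le)
    obtain ⟨A₀, A₁, hA₀, hA₁, hlow⟩ := part3 m hm1
    have hup := h m hMm A₀ A₁ hA₀ hA₁
    have hchain := le_trans hlow hup
    have hexp : (1/8 : ℝ) * (m : ℝ) ^ ((3:ℝ)/2) ≤ c' * m * Real.logb 2 m :=
      (Real.rpow_le_rpow_left_iff (by norm_num)).mp hchain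
    have hm32 : ((m : ℕ) : ℝ) ^ ((3:ℝ)/2) = (2:ℝ) ^ (3 * t) :=
      rpow_two_pow_eq (2 * t) (3 * t) (by ring)
    have hmcast : ((m : ℕ) : ℝ) = (2:ℝ) ^ (2 * t) := by push_cast [hmdef]; ring
    have hlogb : Real.logb 2 ((m : ℕ) : ℝ) = (2 * t : ℕ) := by
      rw [hmcast, ← Real.rpow_natCast (2:ℝ) (2 * t), Real.logb_rpow (by norm_num) (by norm_num)]
    rw [hm32, hlogb, hmcast] at hexp
    -- hexp : (1/8) * 2^(3t) ≤ c' * 2^(2t) * (2t)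
    have hsplit : (2:ℝ) ^ (3 * t) = (2:ℝ) ^ (2 * t) * (2:ℝ) ^ t := by
      rw [← pow_add]; congr 1; omega
    rw [hsplit] at hexp
    have hX : (0:ℝ) < (2:ℝ) ^ (2 * t) := by positivity
    have key : (1/8 : ℝ) * (2:ℝ) ^ t ≤ c' * (2 * t) := by
      have h1 : (2:ℝ) ^ (2 * t) * ((1/8 : ℝ) * (2:ℝ) ^ t) ≤
          (2:ℝ) ^ (2 * t) * (c' * (2 * t)) := by push_cast at hexp ⊢; nlinarith [hexp]
      exact le_of_mul_le_mul_left h1 hX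
    have hY : ((t : ℝ)) ^ 2 ≤ (2:ℝ) ^ t := by exact_mod_cast sq_le_two_pow t ht4
    have htpos : (0:ℝ) < t := by positivity
    nlinarith [mul_pos htpos (sub_pos.mpr htc)]
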